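/- Let μ ≥ 0, D > 0, and let {(x_i, g_i, f_i)}_{i∈I} be a finite set of triples in E × E × ℝ satisfying f_i − f_j − ⟨g_j, x_i − x_j⟩ ≥ (μ/2)‖x_i − x_j‖² and ‖x_i − x_j‖ ≤ D for all i, j ∈ I. Then there exists a μ-strongly convex proper closed function F whose effective domain has diameter at most D, with F(x_i) = f_i and g_i ∈ ∂F(x_i) for all i ∈ I. -/

import Mathlib

variable {E : Type*} [NormedAddCommGroup E] [InnerProductSpace ℝ E] [FiniteDimensional ℝ E]

/-- `f` is a proper, closed (lower semicontinuous) convex extended-real-valued function. -/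
def IsProperClosedConvex (f : E → EReal) : Prop :=
  (∃ x, f x ≠ ⊤) ∧ (∀ x, f x ≠ ⊥) ∧ LowerSemicontinuous f ∧
    ∀ x y : E, ∀ t : ℝ, 0 ≤ t → t ≤ 1 →
      f (t • x + (1 - t) • y) ≤ (t : EReal) * f x + ((1 - t : ℝ) : EReal) * f y

/-- `g` is a subgradient of `f` at `x`. -/
def IsSubgradientAt (f : E → EReal) (x g : E) : Prop :=
  ∀ y, f x + ((inner ℝ g (y - x) : ℝ) : EReal) ≤ f y

/-- `f` is `μ`-strongly convex (i.e. `f - μ/2‖·‖²` is convex). -/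
def IsStronglyConvexWith (μ : ℝ) (f : E → EReal) : Prop :=
  ∀ x y : E, ∀ t : ℝ, 0 ≤ t → t ≤ 1 →
    f (t • x + (1 - t) • y) ≤
      (t : EReal) * f x + ((1 - t : ℝ) : EReal) * f y -
        ((μ / 2 * (t * (1 - t)) * ‖x - y‖ ^ 2 : ℝ) : EReal)

set_option linter.unusedSectionVars false in
lemma my_norm_combo_sq (t : ℝ) (u v : E) :
    ‖t • u + (1 - t) • v‖ ^ 2
      = t * ‖u‖ ^ 2 + (1 - t) * ‖v‖ ^ 2 - t * (1 - t) * ‖u - v‖ ^ 2 := by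
  have h : ∀ w : E, ‖w‖ ^ 2 = inner ℝ w w := fun w => (real_inner_self_eq_norm_sq w).symm
  simp only [h, inner_add_left, inner_add_right, inner_sub_left, inner_sub_right,
    real_inner_smul_left, real_inner_smul_right]
  rw [real_inner_comm v u]
  ring

set_option linter.unusedSectionVars false in
lemma my_combo_sub (t : ℝ) (a b w : E) :
    t • a + (1 - t) • b - w = t • (a - w) + (1 - t) • (b - w) := by
  module

lemma my_mul_ne_bot {t : ℝ} (ht : 0 < t) {q : EReal} (hq : q ≠ ⊥) : (t : EReal) * q ≠ ⊥ := by
  induction q using EReal.rec with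
  | bot => exact absurd rfl hq
  | coe y => rw [← EReal.coe_mul]; exact EReal.coe_ne_bot _
  | top => rw [EReal.coe_mul_top_of_pos ht]; exact top_ne_bot

lemma my_top_case {p q : EReal} {t r : ℝ} (hp : p ≠ ⊥) (hq : q ≠ ⊥) (h : p = ⊤ ∨ q = ⊤)
    (ht0 : 0 < t) (ht1 : t < 1) :
    (t : EReal) * p + ((1 - t : ℝ) : EReal) * q - (r : EReal) = ⊤ := by
  have h1t : (0:ℝ) < 1 - t := by linarith
  have key : (t : EReal) * p + ((1 - t : ℝ) : EReal) * q = ⊤ := by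
    rcases h with h | h
    · rw [h, EReal.coe_mul_top_of_pos ht0, EReal.top_add_of_ne_bot (my_mul_ne_bot h1t hq)]
    · rw [h, EReal.coe_mul_top_of_pos h1t, EReal.add_top_of_ne_bot (my_mul_ne_bot ht0 hp)]
  rw [key, EReal.top_sub_coe]

set_option linter.unusedSectionVars false in
lemma my_helper (μ : ℝ) (hμ : 0 ≤ μ) (C : Set E) (hconv : Convex ℝ C) (hclosed : IsClosed C)
    (hne : C.Nonempty) (G : E → ℝ) (hG : Continuous G)
    (hsc : ∀ a ∈ C, ∀ b ∈ C, ∀ t : ℝ, 0 ≤ t → t ≤ 1 →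
      G (t • a + (1 - t) • b) ≤ t * G a + (1 - t) * G b - μ / 2 * (t * (1 - t)) * ‖a - b‖ ^ 2)
    (F : E → EReal) (hFin : ∀ z ∈ C, F z = ((G z : EReal))) (hFout : ∀ z ∉ C, F z = ⊤) :
    IsProperClosedConvex F ∧ IsStronglyConvexWith μ F := by
  have hFnb : ∀ z, F z ≠ ⊥ := by
    intro z
    by_cases h : z ∈ C
    · rw [hFin z h]; exact EReal.coe_ne_bot _
    · rw [hFout z h]; exact top_ne_bot
  have hstrong : IsStronglyConvexWith μ F := by
    intro a b t ht0 ht1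
    rcases eq_or_lt_of_le ht0 with h0 | h0
    · subst h0
      simp only [zero_smul, sub_zero, one_smul, zero_add, EReal.coe_zero, zero_mul,
        EReal.coe_one, one_mul, mul_zero]
      norm_num
    rcases eq_or_lt_of_le ht1 with h1 | h1
    · subst h1
      simp only [one_smul, sub_self, zero_smul, add_zero, EReal.coe_one, one_mul,
        EReal.coe_zero, zero_mul, mul_zero, mul_one]
      norm_num
    by_cases ha : a ∈ C
    · by_cases hb : b ∈ C
      · have hc : t • a + (1 - t) • b ∈ C := hconv ha hb ht0 (by linarith) (by ring)
        rw [hFin a ha, hFin b hb, hFin _ hc, ← EReal.coe_mul, ← EReal.coe_mul,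
          ← EReal.coe_add, ← EReal.coe_sub, EReal.coe_le_coe_iff]
        exact hsc a ha b hb t ht0 ht1
      · rw [my_top_case (hFnb a) (hFnb b) (Or.inr (hFout b hb)) h0 h1]
        exact le_top
    · rw [my_top_case (hFnb a) (hFnb b) (Or.inl (hFout a ha)) h0 h1]
      exact le_top
  refine ⟨⟨?_, hFnb, ?_, ?_⟩, hstrong⟩
  · obtain ⟨w, hw⟩ := hne
    exact ⟨w, by rw [hFin w hw]; exact EReal.coe_ne_top _⟩
  · have hlow : ∀ z, (G z : EReal) ≤ F z := by
      intro z
      by_cases h : z ∈ C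
      · rw [hFin z h]
      · rw [hFout z h]; exact le_top
    intro z0 y hy
    by_cases h : z0 ∈ C
    · rw [hFin z0 h] at hy
      have hopen : IsOpen {z | y < (G z : EReal)} :=
        isOpen_lt continuous_const (EReal.continuous_coe_iff.2 hG)
      filter_upwards [hopen.mem_nhds hy] with z hz using lt_of_lt_of_le hz (hlow z)
    · filter_upwards [hclosed.isOpen_compl.mem_nhds h] with z hz
      rw [hFout z hz]
      exact lt_of_lt_of_le hy le_top
  · intro a b t ht0 ht1
    refine le_trans (hstrong a b t ht0 ht1) ?_
    set B := (t : EReal) * F a + ((1 - t : ℝ) : EReal) * F b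
    rw [sub_eq_add_neg]
    calc B + -((μ / 2 * (t * (1 - t)) * ‖a - b‖ ^ 2 : ℝ) : EReal)
        ≤ B + 0 := by
          apply add_le_add (le_refl B)
          rw [← EReal.coe_neg, ← EReal.coe_zero, EReal.coe_le_coe_iff]
          have h1 : (0:ℝ) ≤ 1 - t := by linarith
          have hr : (0:ℝ) ≤ μ / 2 * (t * (1 - t)) * ‖a - b‖ ^ 2 := by positivity
          linarith
      _ = B := add_zero B

/-- Sufficiency of the strongly convex interpolation conditions with a bound `D` on the
diameter of the domain. -/
theorem stmt3 {ι : Type*} [Fintype ι] (μ D : ℝ) (hμ : 0 ≤ μ) (hD : 0 < D)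
    (x g : ι → E) (f : ι → ℝ)
    (hineq : ∀ i j, μ / 2 * ‖x i - x j‖ ^ 2 ≤ f i - f j - (inner ℝ (g j) (x i - x j) : ℝ))
    (hdiam : ∀ i j, ‖x i - x j‖ ≤ D) :
    ∃ F : E → EReal, IsProperClosedConvex F ∧ IsStronglyConvexWith μ F ∧
      (∀ y z, F y ≠ ⊤ → F z ≠ ⊤ → ‖y - z‖ ≤ D) ∧
      ∀ i, F (x i) = ((f i : ℝ) : EReal) ∧ IsSubgradientAt F (x i) (g i) := by
  classical
  by_cases hne : Nonempty ι
  · haveI := hne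
    set q : ι → E → ℝ :=
      fun i z => f i + (inner ℝ (g i) (z - x i) : ℝ) + μ / 2 * ‖z - x i‖ ^ 2 with hq
    set G : E → ℝ := fun z => Finset.univ.sup' Finset.univ_nonempty (fun i => q i z) with hG
    set C : Set E := convexHull ℝ (Set.range x) with hC
    have hcompact : IsCompact C := (Set.finite_range x).isCompact_convexHull ℝ
    have hGcont : Continuous G := by
      apply Continuous.finset_sup'_apply Finset.univ_nonempty
      intro i _
      simp only [hq]
      exact (continuous_const.add
        (Continuous.inner continuous_const (continuous_id.sub continuous_const))).add
        (continuous_const.mul (((continuous_id.sub continuous_const).norm).pow 2))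
    have hq_le_G : ∀ i z, q i z ≤ G z := by
      intro i z
      exact Finset.le_sup' (fun j => q j z) (Finset.mem_univ i)
    have hq_combo : ∀ i a b (t : ℝ),
        q i (t • a + (1 - t) • b)
          = t * q i a + (1 - t) * q i b - μ / 2 * (t * (1 - t)) * ‖a - b‖ ^ 2 := by
      intro i a b t
      simp only [hq]
      rw [my_combo_sub t a b (x i), my_norm_combo_sq]
      have huv : (a - x i) - (b - x i) = a - b := by abel
      rw [huv, inner_add_right, real_inner_smul_right, real_inner_smul_right]
      ring
    have hsc : ∀ a ∈ C, ∀ b ∈ C, ∀ t : ℝ, 0 ≤ t → t ≤ 1 →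
        G (t • a + (1 - t) • b)
          ≤ t * G a + (1 - t) * G b - μ / 2 * (t * (1 - t)) * ‖a - b‖ ^ 2 := by
      intro a _ b _ t ht0 ht1
      refine Finset.sup'_le _ _ fun i _ => ?_
      rw [hq_combo]
      have h1 : t * q i a ≤ t * G a :=
        mul_le_mul_of_nonneg_left (hq_le_G i a) ht0
      have h2 : (1 - t) * q i b ≤ (1 - t) * G b :=
        mul_le_mul_of_nonneg_left (hq_le_G i b) (by linarith)
      exact sub_le_sub_right (add_le_add h1 h2) _
    set F : E → EReal := fun z => if z ∈ C then ((G z : EReal)) else ⊤ with hF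
    have hFin : ∀ z ∈ C, F z = ((G z : EReal)) := fun z hz => if_pos hz
    have hFout : ∀ z ∉ C, F z = ⊤ := fun z hz => if_neg hz
    obtain ⟨hp, hs⟩ := my_helper μ hμ C (convex_convexHull ℝ _) hcompact.isClosed
      ⟨x (Classical.arbitrary ι), subset_convexHull ℝ _ (Set.mem_range_self _)⟩
      G hGcont hsc F hFin hFout
    have hxC : ∀ i, x i ∈ C := fun i => subset_convexHull ℝ _ (Set.mem_range_self i)
    have hGxi : ∀ i, G (x i) = f i := by
      intro i
      refine le_antisymm (Finset.sup'_le _ _ fun j _ => ?_) ?_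
      · have h := hineq i j
        simp only [hq]
        linarith
      · have h := hq_le_G i (x i)
        simp only [hq, sub_self, inner_zero_right, norm_zero] at h
        simpa using h
    refine ⟨F, hp, hs, ?_, ?_⟩
    · intro y z hy hz
      have hyC : y ∈ C := by by_contra h; exact hy (hFout y h)
      have hzC : z ∈ C := by by_contra h; exact hz (hFout z h)
      have hd : dist y z ≤ Metric.diam C := Metric.dist_le_diam_of_mem hcompact.isBounded hyC hzC
      rw [hC, convexHull_diam] at hd
      have hdr : Metric.diam (Set.range x) ≤ D := by
        apply Metric.diam_le_of_forall_dist_le hD.le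
        rintro a ⟨i, rfl⟩ b ⟨j, rfl⟩
        rw [dist_eq_norm]
        exact hdiam i j
      rw [← dist_eq_norm]
      linarith
    · intro i
      have hFxi : F (x i) = ((f i : ℝ) : EReal) := by
        rw [hFin _ (hxC i), hGxi i]
      refine ⟨hFxi, ?_⟩
      intro y
      by_cases hy : y ∈ C
      · rw [hFxi, hFin y hy, ← EReal.coe_add, EReal.coe_le_coe_iff]
        have h1 : q i y ≤ G y := hq_le_G i y
        have h2 : (0:ℝ) ≤ μ / 2 * ‖y - x i‖ ^ 2 := by positivity
        simp only [hq] at h1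
        linarith
      · rw [hFout y hy]
        exact le_top
  · refine ⟨fun z => if z ∈ ({0} : Set E) then ((0 : ℝ) : EReal) else ⊤, ?_, ?_, ?_, ?_⟩
    on_goal 4 => exact fun i => absurd ⟨i⟩ hne
    on_goal 3 =>
      intro y z hy hz
      have hy0 : y = 0 := by by_contra h; exact hy (if_neg h)
      have hz0 : z = 0 := by by_contra h; exact hz (if_neg h)
      rw [hy0, hz0, sub_self, norm_zero]
      exact hD.le
    all_goals {
      obtain ⟨hp, hs⟩ := my_helper μ hμ ({0} : Set E) (convex_singleton 0) isClosed_singleton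
        ⟨0, rfl⟩ (fun _ => (0:ℝ)) continuous_const
        (by
          intro a ha b hb t ht0 ht1
          rw [Set.mem_singleton_iff] at ha hb
          subst ha; subst hb
          simp)
        (fun z => if z ∈ ({0} : Set E) then ((0 : ℝ) : EReal) else ⊤)
        (fun z hz => if_pos hz) (fun z hz => if_neg hz)
      first | exact hp | exact hs }
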